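/- Let R be an integral domain, N ≥ 1, and let A be the finite-dimensional evolution algebra over R on the basis x_1, …, x_N with structure coefficient matrix C. Then A is nilpotent if and only if there exists a permutation σ of {1, …, N} (an ordering of the generators) such that the reordered structure coefficient matrix is strictly upper triangular, i.e. C(σ(k), σ(i)) = 0 whenever k ≥ i. (Theorem 2.6) -/

import Mathlib

/-!
Finite-dimensional evolution algebra over a commutative ring `R` on the basis
`x_1, …, x_N` (the standard basis of `Fin N → R`), with structure coefficient
matrix `C`: `x_i · x_i = ∑_k C(k,i) • x_k` and `x_i · x_j = 0` for `i ≠ j`;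
concretely `(a · b)(k) = ∑_i a(i) * b(i) * C(k,i)`.
-/
def evolMulFin {R : Type*} [CommRing R] {N : ℕ} (C : Matrix (Fin N) (Fin N) R)
    (a b : Fin N → R) : Fin N → R :=
  fun k => ∑ i, a i * b i * C k i

/-- Left-normed products: `lnp mul f m = ((f 0 · f 1) · f 2) ⋯ · f m`
is the left-normed product of the `m + 1` elements `f 0, …, f m`. -/
def lnp {A : Type*} (mul : A → A → A) (f : ℕ → A) : ℕ → A
  | 0 => f 0
  | m + 1 => mul (lnp mul f m) (f (m + 1))

/-- Theorem 2.6: Over an integral domain `R`, the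
finite-dimensional evolution algebra `A` is nilpotent if and only if there is
an ordering (permutation) `σ` of the generators under which the structure
coefficient matrix is strictly upper triangular:
`C (σ k) (σ i) = 0` whenever `k ≥ i`. -/
theorem wf_of_no_chain {α : Type*} (r : α → α → Prop)
    (h : ∀ c : ℕ → α, ∃ j, ¬ r (c (j+1)) (c j)) : WellFounded r := by
  by_contra hwf
  have h1 : ∃ a, ¬ Acc r a := by
    by_contra h2
    push_neg at h2
    exact hwf ⟨h2⟩
  have step : ∀ x, ¬ Acc r x → ∃ y, r y x ∧ ¬ Acc r y := by
    intro x hx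
    by_contra h3
    push_neg at h3
    exact hx (Acc.intro x h3)
  choose g hg1 hg2 using step
  obtain ⟨a, ha⟩ := h1
  let c : ℕ → {x : α // ¬ Acc r x} :=
    fun n => Nat.rec ⟨a, ha⟩ (fun _ p => ⟨g p.1 p.2, hg2 p.1 p.2⟩) n
  obtain ⟨j, hj⟩ := h (fun n => (c n).1)
  exact hj (hg1 (c j).1 (c j).2)

theorem nilpotent_iff_strictly_upper_triangular {R : Type*} [CommRing R]
    [IsDomain R] {N : ℕ} (hN : 1 ≤ N) (C : Matrix (Fin N) (Fin N) R) :
    (∃ n : ℕ, 2 ≤ n ∧ ∀ f : ℕ → (Fin N → R), lnp (evolMulFin C) f (n - 1) = 0) ↔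
    (∃ σ : Equiv.Perm (Fin N), ∀ k i : Fin N, i ≤ k → C (σ k) (σ i) = 0) := by
  constructor
  · rintro ⟨n, hn2, hnil⟩
    -- no infinite walk in the digraph i → k (edge when C k i ≠ 0)
    have nowalk : ∀ c : ℕ → Fin N, ∃ j, ¬ (C (c (j+1)) (c j) ≠ 0) := by
      intro c
      by_contra hc
      push_neg at hc
      -- build the sequence of basis elements following the walk
      set f : ℕ → (Fin N → R) := fun j => Pi.single (c (j - 1)) 1 with hf
      have key : ∀ m, lnp (evolMulFin C) f (m + 1) =
          fun k => (∏ j ∈ Finset.range m, C (c (j+1)) (c j)) * C k (c m) := by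
        intro m
        induction m with
        | zero =>
          show evolMulFin C (f 0) (f 1) = _
          funext k
          simp [evolMulFin, hf, Pi.single_apply, mul_ite, ite_mul]
        | succ m ih =>
          show evolMulFin C (lnp (evolMulFin C) f (m+1)) (f (m+2)) = _
          rw [ih]
          funext k
          simp only [evolMulFin, hf]
          have : (m + 2 - 1 : ℕ) = m + 1 := rfl
          rw [this]
          rw [Finset.sum_eq_single (c (m+1))]
          · rw [Finset.prod_range_succ]; simp [mul_comm, mul_assoc, mul_left_comm]
          · intro b _ hb; simp [Pi.single_apply, hb]
          · simp
      have := hnil f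
      obtain ⟨m, hm⟩ : ∃ m, n - 1 = m + 1 := ⟨n - 2, by omega⟩
      rw [hm, key m] at this
      have := congrFun this (c (m+1))
      simp only [Pi.zero_apply] at this
      rcases mul_eq_zero.mp this with h1 | h1
      · obtain ⟨j, _, hj⟩ := Finset.prod_eq_zero_iff.mp h1
        exact hc j hj
      · exact hc m h1
    simp only [not_not] at nowalk
    have hwf : WellFounded (fun k i : Fin N => C k i ≠ 0) := wf_of_no_chain _ (by
      intro c
      obtain ⟨j, hj⟩ := nowalk c
      exact ⟨j, by simp [hj]⟩)
    -- rank function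
    classical
    set h : Fin N → Ordinal := IsWellFounded.rank (hwf := ⟨hwf⟩) (fun k i : Fin N => C k i ≠ 0) with hh
    refine ⟨Tuple.sort h, fun k i hik => ?_⟩
    by_contra hC
    have h1 : h (Tuple.sort h k) < h (Tuple.sort h i) :=
      IsWellFounded.rank_lt_of_rel (hwf := ⟨hwf⟩) hC
    have h2 : h (Tuple.sort h i) ≤ h (Tuple.sort h k) := Tuple.monotone_sort h hik
    exact absurd h1 (not_lt.mpr h2)
  · rintro ⟨σ, hσ⟩
    refine ⟨N + 1, by omega, fun f => ?_⟩
    have key : ∀ m, ∀ j : Fin N, N - m ≤ (j : ℕ) → lnp (evolMulFin C) f m (σ j) = 0 := by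
      intro m
      induction m with
      | zero => intro j hj; exact absurd j.2 (by omega)
      | succ m ih =>
        intro k hk
        show evolMulFin C (lnp (evolMulFin C) f m) (f (m+1)) (σ k) = 0
        simp only [evolMulFin]
        rw [← Equiv.sum_comp σ
          (fun i => lnp (evolMulFin C) f m i * f (m+1) i * C (σ k) i)]
        apply Finset.sum_eq_zero
        intro j _
        rcases le_or_gt j k with hjk | hjk
        · rw [hσ k j hjk, mul_zero]
        · rw [ih j (by have := Fin.lt_iff_val_lt_val.mp hjk; omega), zero_mul, zero_mul]
    have : (N + 1 - 1 : ℕ) = N := rfl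
    rw [this]
    funext k
    have := key N (σ.symm k) (by omega)
    simpa using this
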